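/- Let A be a free associative K-algebra on generators x₁,…,x_k. Given words u₁,…,u_k ∈ A, the relation Σᵢ [uᵢ, xᵢ] = 0 holds if and only if there exists f ∈ A/(K + [A,A]) such that uᵢ equals the necklace derivative ∂f/∂xᵢ for every i. -/

import Mathlib

set_option linter.unusedSectionVars false
set_option maxHeartbeats 1000000


variable (K : Type) [Field K] [CharZero K] (n : ℕ)

/-- The monomial (word) in the free algebra `K⟨x₁,…,xₙ⟩` determined by a list of indices. -/
def wordProd (w : List (Fin n)) : FreeAlgebra K (Fin n) :=
  (w.map (FreeAlgebra.ι K)).prod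

/-- The necklace derivative `∂w/∂x_j` of a word. -/
def wordDeriv (j : Fin n) (w : List (Fin n)) : FreeAlgebra K (Fin n) :=
  ∑ k ∈ Finset.range w.length,
    if w[k]? = some j then wordProd K n ((w.rotate k).tail) else 0

/-- The necklace derivative `∂/∂x_j`, extended `K`-linearly to the whole free algebra
using the basis of words. -/
noncomputable def nderiv (j : Fin n) :
    FreeAlgebra K (Fin n) →ₗ[K] FreeAlgebra K (Fin n) :=
  (FreeAlgebra.basisFreeMonoid K (Fin n)).constr ℕ
    (fun w => wordDeriv K n j (FreeMonoid.toList w))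

lemma wordProd_append (l₁ l₂ : List (Fin n)) :
    wordProd K n (l₁ ++ l₂) = wordProd K n l₁ * wordProd K n l₂ := by
  simp [wordProd]

lemma wordProd_cons (a : Fin n) (l : List (Fin n)) :
    wordProd K n (a :: l) = FreeAlgebra.ι K a * wordProd K n l := by
  simp [wordProd]

lemma basis_eq_wordProd (l : List (Fin n)) :
    FreeAlgebra.basisFreeMonoid K (Fin n) (FreeMonoid.ofList l) = wordProd K n l := by
  have key : ∀ l : List (Fin n),
      (FreeAlgebra.equivMonoidAlgebraFreeMonoid (R := K) (X := Fin n)).symm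
        (MonoidAlgebra.single (FreeMonoid.ofList l) 1) = wordProd K n l := by
    intro l
    induction l with
    | nil => simp [wordProd, MonoidAlgebra.one_def]
    | cons a t ih =>
      have h1 : (FreeMonoid.ofList (a :: t)) = FreeMonoid.of a * FreeMonoid.ofList t := rfl
      rw [h1, ← one_mul (1 : K), ← MonoidAlgebra.single_mul_single, map_mul, ih]
      have h2 : (FreeAlgebra.equivMonoidAlgebraFreeMonoid (R := K) (X := Fin n)).symm
          (MonoidAlgebra.single (FreeMonoid.of a) (1:K)) = FreeAlgebra.ι K a := by
        rw [AlgEquiv.symm_apply_eq]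
        simp [FreeAlgebra.equivMonoidAlgebraFreeMonoid, MonoidAlgebra.of_apply]
      rw [h2]
      simp [wordProd]
  rw [FreeAlgebra.basisFreeMonoid, Module.Basis.map_apply]
  exact key l

/-- projection onto degree-ℓ component -/
noncomputable def projL (ℓ : ℕ) : FreeAlgebra K (Fin n) →ₗ[K] FreeAlgebra K (Fin n) :=
  (FreeAlgebra.basisFreeMonoid K (Fin n)).constr ℕ
    (fun w => if (FreeMonoid.toList w).length = ℓ then wordProd K n (FreeMonoid.toList w) else 0)

/-- left division by `x_i` -/
noncomputable def Lop (i : Fin n) : FreeAlgebra K (Fin n) →ₗ[K] FreeAlgebra K (Fin n) :=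
  (FreeAlgebra.basisFreeMonoid K (Fin n)).constr ℕ
    (fun w => if (FreeMonoid.toList w).head? = some i
      then wordProd K n (FreeMonoid.toList w).tail else 0)

/-- rotation by one (killing constants) -/
noncomputable def Rop : FreeAlgebra K (Fin n) →ₗ[K] FreeAlgebra K (Fin n) :=
  (FreeAlgebra.basisFreeMonoid K (Fin n)).constr ℕ
    (fun w => if (FreeMonoid.toList w) = [] then 0
      else wordProd K n ((FreeMonoid.toList w).rotate 1))

lemma projL_word (ℓ : ℕ) (l : List (Fin n)) :
    projL K n ℓ (wordProd K n l) = if l.length = ℓ then wordProd K n l else 0 := by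
  conv_lhs => rw [← basis_eq_wordProd, projL, Module.Basis.constr_basis]
  simp
  congr

lemma Lop_word (i : Fin n) (l : List (Fin n)) :
    Lop K n i (wordProd K n l) = if l.head? = some i then wordProd K n l.tail else 0 := by
  conv_lhs => rw [← basis_eq_wordProd, Lop, Module.Basis.constr_basis]
  simp
  congr

lemma Rop_word (l : List (Fin n)) :
    Rop K n (wordProd K n l) = if l = [] then 0 else wordProd K n (l.rotate 1) := by
  conv_lhs => rw [← basis_eq_wordProd, Rop, Module.Basis.constr_basis]
  simp
  congr

lemma nderiv_word (i : Fin n) (l : List (Fin n)) :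
    nderiv K n i (wordProd K n l) = wordDeriv K n i l := by
  conv_lhs => rw [← basis_eq_wordProd, nderiv, Module.Basis.constr_basis]
  simp

/-- check a linear map identity on word products -/
lemma lmap_ext {F G : FreeAlgebra K (Fin n) →ₗ[K] FreeAlgebra K (Fin n)}
    (h : ∀ l : List (Fin n), F (wordProd K n l) = G (wordProd K n l)) : F = G := by
  apply (FreeAlgebra.basisFreeMonoid K (Fin n)).ext
  intro w
  rw [← FreeMonoid.ofList_toList w, basis_eq_wordProd]
  exact h _

lemma Rop_eq_sum :
    Rop K n = ∑ i : Fin n, (LinearMap.mulRight K (FreeAlgebra.ι K i)) ∘ₗ Lop K n i := by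
  apply lmap_ext
  intro l
  rw [Rop_word]
  simp only [LinearMap.sum_apply, LinearMap.comp_apply, Lop_word, LinearMap.mulRight_apply]
  cases l with
  | nil => simp
  | cons a t =>
    simp only [List.head?_cons, if_neg (List.cons_ne_nil a t)]
    rw [Finset.sum_eq_single a]
    · simp only [if_pos rfl, List.tail_cons]
      rw [List.rotate_cons_succ, List.rotate_zero, wordProd_append]
      simp [wordProd]
    · intro b _ hb
      simp [Option.some_inj, Ne.symm hb]
    · simp

lemma sum_mulLeft_Lop (l : List (Fin n)) (hl : l ≠ []) :
    ∑ i : Fin n, FreeAlgebra.ι K i * Lop K n i (wordProd K n l) = wordProd K n l := by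
  cases l with
  | nil => exact absurd rfl hl
  | cons a t =>
    rw [Finset.sum_eq_single a]
    · rw [Lop_word, if_pos (by simp), List.tail_cons, wordProd_cons]
    · intro b _ hb
      simp [Lop_word, Option.some_inj, Ne.symm hb]
    · simp

lemma Lop_mul_ι (i j : Fin n) (a : FreeAlgebra K (Fin n)) :
    Lop K n i (FreeAlgebra.ι K j * a) = if j = i then a else 0 := by
  have h : Lop K n i ∘ₗ LinearMap.mulLeft K (FreeAlgebra.ι K j)
      = if j = i then LinearMap.id else 0 := by
    apply lmap_ext
    intro l
    simp only [LinearMap.comp_apply, LinearMap.mulLeft_apply, ← wordProd_cons, Lop_word]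
    by_cases hji : j = i
    · subst hji; simp
    · simp [hji, Option.some_inj]
  have h2 := LinearMap.congr_fun h a
  by_cases hji : j = i <;> simpa [hji] using h2

lemma projL_mulRight (ℓ : ℕ) (i : Fin n) (a : FreeAlgebra K (Fin n)) :
    projL K n (ℓ + 1) (a * FreeAlgebra.ι K i) = projL K n ℓ a * FreeAlgebra.ι K i := by
  have h : projL K n (ℓ+1) ∘ₗ LinearMap.mulRight K (FreeAlgebra.ι K i)
      = LinearMap.mulRight K (FreeAlgebra.ι K i) ∘ₗ projL K n ℓ := by
    apply lmap_ext
    intro l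
    have : wordProd K n l * FreeAlgebra.ι K i = wordProd K n (l ++ [i]) := by
      rw [wordProd_append]; simp [wordProd]
    simp only [LinearMap.comp_apply, LinearMap.mulRight_apply, this, projL_word]
    simp only [List.length_append, List.length_cons, List.length_nil]
    split
    · rename_i h'
      rw [if_pos (by omega), this]
    · rename_i h'
      rw [if_neg (by omega), zero_mul]
  have := LinearMap.congr_fun h a
  simpa using this

lemma projL_mulLeft (ℓ : ℕ) (i : Fin n) (a : FreeAlgebra K (Fin n)) :
    projL K n (ℓ + 1) (FreeAlgebra.ι K i * a) = FreeAlgebra.ι K i * projL K n ℓ a := by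
  have h : projL K n (ℓ+1) ∘ₗ LinearMap.mulLeft K (FreeAlgebra.ι K i)
      = LinearMap.mulLeft K (FreeAlgebra.ι K i) ∘ₗ projL K n ℓ := by
    apply lmap_ext
    intro l
    simp only [LinearMap.comp_apply, LinearMap.mulLeft_apply, ← wordProd_cons, projL_word]
    simp only [List.length_cons]
    split
    · rename_i h'
      rw [if_pos (by omega), wordProd_cons]
    · rename_i h'
      rw [if_neg (by omega), mul_zero]
  have := LinearMap.congr_fun h a
  simpa using this

lemma projL_idem (ℓ : ℕ) (a : FreeAlgebra K (Fin n)) :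
    projL K n ℓ (projL K n ℓ a) = projL K n ℓ a := by
  have h : projL K n ℓ ∘ₗ projL K n ℓ = projL K n ℓ := by
    apply lmap_ext
    intro l
    simp only [LinearMap.comp_apply, projL_word]
    split <;> simp [projL_word, *]
  exact LinearMap.congr_fun h a

lemma Rop_pow_word (k : ℕ) (l : List (Fin n)) (hl : l ≠ []) :
    (Rop K n ^ k) (wordProd K n l) = wordProd K n (l.rotate k) := by
  induction k with
  | zero => simp
  | succ k ih =>
    rw [pow_succ', Module.End.mul_apply, ih, Rop_word,
      if_neg (by simp [List.rotate_eq_nil_iff, hl]), List.rotate_rotate]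

lemma basis_eq' (w : FreeMonoid (Fin n)) :
    FreeAlgebra.basisFreeMonoid K (Fin n) w = wordProd K n (FreeMonoid.toList w) := by
  conv_lhs => rw [← FreeMonoid.ofList_toList w]
  exact basis_eq_wordProd K n _

lemma Rop_apply (a : FreeAlgebra K (Fin n)) :
    Rop K n a = ∑ i : Fin n, Lop K n i a * FreeAlgebra.ι K i := by
  have := LinearMap.congr_fun (Rop_eq_sum K n) a
  simpa using this

lemma nderiv_projL (ℓ : ℕ) (i : Fin n) :
    nderiv K n i ∘ₗ projL K n (ℓ+1)
      = (∑ k ∈ Finset.range (ℓ+1), Lop K n i ∘ₗ (Rop K n) ^ k) ∘ₗ projL K n (ℓ+1) := by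
  apply lmap_ext
  intro l
  simp only [LinearMap.comp_apply, projL_word]
  split
  · rename_i hlen
    have hl : l ≠ [] := by
      intro h; rw [h] at hlen; simp at hlen
    rw [nderiv_word, wordDeriv, LinearMap.sum_apply, hlen]
    apply Finset.sum_congr rfl
    intro k hk
    rw [Finset.mem_range] at hk
    rw [LinearMap.comp_apply, Rop_pow_word K n k l hl, Lop_word,
      List.head?_rotate (by omega)]
  · simp

lemma key_cyclic (f : FreeAlgebra K (Fin n)) :
    ∑ i : Fin n, (nderiv K n i f * FreeAlgebra.ι K i
      - FreeAlgebra.ι K i * nderiv K n i f) = 0 := by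
  have hΦ : (∑ i : Fin n, ((LinearMap.mulRight K (FreeAlgebra.ι K i)
      - LinearMap.mulLeft K (FreeAlgebra.ι K i)) ∘ₗ nderiv K n i))
      = (0 : FreeAlgebra K (Fin n) →ₗ[K] FreeAlgebra K (Fin n)) := by
    apply lmap_ext
    intro l
    simp only [LinearMap.sum_apply, LinearMap.comp_apply, LinearMap.sub_apply,
      LinearMap.mulRight_apply, LinearMap.mulLeft_apply, LinearMap.zero_apply]
    rcases eq_or_ne l [] with rfl | hl
    · simp [nderiv_word, wordDeriv]
    · obtain ⟨m, hm⟩ : ∃ m, l.length = m + 1 := by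
        have := List.length_pos_iff.mpr hl; exact ⟨l.length - 1, by omega⟩
      have hproj : projL K n (m+1) (wordProd K n l) = wordProd K n l := by
        rw [projL_word, if_pos hm]
      have hnd : ∀ i, nderiv K n i (wordProd K n l)
          = ∑ k ∈ Finset.range (m+1), Lop K n i ((Rop K n ^ k) (wordProd K n l)) := by
        intro i
        have h1 := LinearMap.congr_fun (nderiv_projL K n m i) (wordProd K n l)
        rw [LinearMap.comp_apply, LinearMap.comp_apply, hproj, LinearMap.sum_apply] at h1
        simpa using h1
      have step : ∀ k ∈ Finset.range (m+1),
          (∑ i : Fin n, (Lop K n i ((Rop K n ^ k) (wordProd K n l)) * FreeAlgebra.ι K i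
            - FreeAlgebra.ι K i * Lop K n i ((Rop K n ^ k) (wordProd K n l))))
          = wordProd K n (l.rotate (k+1)) - wordProd K n (l.rotate k) := by
        intro k _
        have hrk : l.rotate k ≠ [] := by simp [List.rotate_eq_nil_iff, hl]
        rw [Finset.sum_sub_distrib]
        rw [Rop_pow_word K n k l hl, ← Rop_apply, Rop_word, if_neg hrk,
          List.rotate_rotate, sum_mulLeft_Lop K n _ hrk]
      calc ∑ i : Fin n, (nderiv K n i (wordProd K n l) * FreeAlgebra.ι K i
            - FreeAlgebra.ι K i * nderiv K n i (wordProd K n l))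
          = ∑ i : Fin n, ∑ k ∈ Finset.range (m+1),
              (Lop K n i ((Rop K n ^ k) (wordProd K n l)) * FreeAlgebra.ι K i
              - FreeAlgebra.ι K i * Lop K n i ((Rop K n ^ k) (wordProd K n l))) := by
            simp only [hnd, Finset.sum_mul, Finset.mul_sum, Finset.sum_sub_distrib]
        _ = ∑ k ∈ Finset.range (m+1), ∑ i : Fin n,
              (Lop K n i ((Rop K n ^ k) (wordProd K n l)) * FreeAlgebra.ι K i
              - FreeAlgebra.ι K i * Lop K n i ((Rop K n ^ k) (wordProd K n l))) :=
            Finset.sum_comm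
        _ = ∑ k ∈ Finset.range (m+1),
              (wordProd K n (l.rotate (k+1)) - wordProd K n (l.rotate k)) :=
            Finset.sum_congr rfl step
        _ = wordProd K n (l.rotate (m+1)) - wordProd K n (l.rotate 0) :=
            Finset.sum_range_sub (fun k => wordProd K n (l.rotate k)) (m+1)
        _ = 0 := by rw [← hm, List.rotate_length, List.rotate_zero, sub_self]
  have := LinearMap.congr_fun hΦ f
  simpa using this

lemma sum_proj (N : ℕ) (a : FreeAlgebra K (Fin n))
    (h : ∀ w ∈ ((FreeAlgebra.basisFreeMonoid K (Fin n)).repr a).support,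
        (FreeMonoid.toList w).length < N) :
    ∑ ℓ ∈ Finset.range N, projL K n ℓ a = a := by
  have ha : a = ∑ w ∈ ((FreeAlgebra.basisFreeMonoid K (Fin n)).repr a).support,
      ((FreeAlgebra.basisFreeMonoid K (Fin n)).repr a) w
        • FreeAlgebra.basisFreeMonoid K (Fin n) w := by
    conv_lhs => rw [← (FreeAlgebra.basisFreeMonoid K (Fin n)).linearCombination_repr a]
    rw [Finsupp.linearCombination_apply, Finsupp.sum]
  conv_lhs => rw [ha]
  conv_rhs => rw [ha]
  simp only [map_sum, map_smul, basis_eq', projL_word]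
  rw [Finset.sum_comm]
  apply Finset.sum_congr rfl
  intro w hw
  rw [← Finset.smul_sum, Finset.sum_ite_eq (Finset.range N),
    if_pos (Finset.mem_range.mpr (h w hw))]

lemma homog_case (v : Fin n → FreeAlgebra K (Fin n)) (ℓ : ℕ)
    (hv : ∀ i, projL K n ℓ (v i) = v i)
    (h : ∑ i : Fin n, v i * FreeAlgebra.ι K i = ∑ i : Fin n, FreeAlgebra.ι K i * v i) :
    ∀ i, nderiv K n i (∑ j : Fin n, v j * FreeAlgebra.ι K j) = (ℓ+1) • v i := by
  set s := ∑ j : Fin n, v j * FreeAlgebra.ι K j with hs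
  have hA : ∀ i, Lop K n i s = v i := by
    intro i
    rw [h, map_sum]
    simp [Lop_mul_ι]
  have hB : Rop K n s = s := by
    rw [Rop_apply]
    simp only [hA]
    exact hs.symm
  have hBk : ∀ k, (Rop K n ^ k) s = s := by
    intro k
    induction k with
    | zero => simp
    | succ k ih => rw [pow_succ', Module.End.mul_apply, ih, hB]
  have hPs : projL K n (ℓ+1) s = s := by
    conv_rhs => rw [hs]
    rw [hs, map_sum]
    exact Finset.sum_congr rfl fun j _ => by rw [projL_mulRight, hv]
  intro i
  have h1 := LinearMap.congr_fun (nderiv_projL K n ℓ i) s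
  rw [LinearMap.comp_apply, LinearMap.comp_apply, hPs, LinearMap.sum_apply] at h1
  rw [h1]
  simp only [LinearMap.comp_apply, hBk, hA]
  rw [Finset.sum_const, Finset.card_range]

/-- for `A = K⟨x₁,…,x_k⟩` free on `x₁,…,x_k` and `u₁,…,u_k ∈ A`,
one has `Σᵢ [uᵢ, xᵢ] = 0` iff there exists `f` such that `uᵢ = ∂f/∂xᵢ` for all `i`
(the necklace derivative only depends on the class of `f` in `A/(K + [A,A])`). -/
theorem stmt11 (u : Fin n → FreeAlgebra K (Fin n)) :
    (∑ i : Fin n, (u i * FreeAlgebra.ι K i - FreeAlgebra.ι K i * u i)) = 0 ↔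
    ∃ f : FreeAlgebra K (Fin n), ∀ i : Fin n, u i = nderiv K n i f := by
  constructor
  · intro H
    have hs : ∑ i : Fin n, u i * FreeAlgebra.ι K i
        = ∑ i : Fin n, FreeAlgebra.ι K i * u i := by
      rw [← sub_eq_zero, ← Finset.sum_sub_distrib]
      exact H
    set N : ℕ := Finset.univ.sup (fun i : Fin n =>
      (((FreeAlgebra.basisFreeMonoid K (Fin n)).repr (u i)).support.sup
        fun w => (FreeMonoid.toList w).length) + 1) with hN
    have hproj : ∀ ℓ, ∑ i : Fin n, projL K n ℓ (u i) * FreeAlgebra.ι K i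
        = ∑ i : Fin n, FreeAlgebra.ι K i * projL K n ℓ (u i) := by
      intro ℓ
      have := congrArg (projL K n (ℓ+1)) hs
      rw [map_sum, map_sum] at this
      simpa only [projL_mulRight, projL_mulLeft] using this
    have hhom : ∀ ℓ i, nderiv K n i
        (∑ j : Fin n, projL K n ℓ (u j) * FreeAlgebra.ι K j)
        = (ℓ+1) • projL K n ℓ (u i) := by
      intro ℓ
      exact homog_case K n (fun j => projL K n ℓ (u j)) ℓ
        (fun j => projL_idem K n ℓ (u j)) (hproj ℓ)
    refine ⟨∑ ℓ ∈ Finset.range N, ((ℓ : K) + 1)⁻¹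
      • (∑ j : Fin n, projL K n ℓ (u j) * FreeAlgebra.ι K j), ?_⟩
    intro i
    rw [map_sum]
    simp only [map_smul, hhom]
    have hstep : ∀ ℓ : ℕ, ((ℓ : K) + 1)⁻¹ • ((ℓ+1) • projL K n ℓ (u i))
        = projL K n ℓ (u i) := by
      intro ℓ
      rw [← Nat.cast_smul_eq_nsmul K, smul_smul]
      have : ((ℓ : K) + 1) ≠ 0 := Nat.cast_add_one_ne_zero ℓ
      rw [show (((ℓ+1 : ℕ) : K)) = (ℓ : K) + 1 by push_cast; ring,
        inv_mul_cancel₀ this, one_smul]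
    simp only [hstep]
    refine (sum_proj K n N (u i) ?_).symm
    intro w hw
    have h1 := Finset.le_sup (f := fun w => (FreeMonoid.toList w).length) hw
    have h2 := Finset.le_sup (s := Finset.univ) (f := fun i : Fin n =>
      (((FreeAlgebra.basisFreeMonoid K (Fin n)).repr (u i)).support.sup
        fun w => (FreeMonoid.toList w).length) + 1) (Finset.mem_univ i)
    rw [← hN] at h2
    omega
  · rintro ⟨f, hf⟩
    simp only [hf]
    exact key_cyclic K n f
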